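/- Let G be a finite simple graph, let G' be its triangle replacement, let t ∈ ℕ, and let S_s and S_g be vertex covers of G of size at most t. There exists a TAR reconfiguration sequence of vertex covers of G with upper threshold t from S_s to S_g if and only if there exists a TAR reconfiguration sequence of feedback vertex sets of G' with upper threshold t from S_s to S_g. -/

import Mathlib

/-!
STATEMENT 15: Let G be a finite simple graph, let G' be its triangle
replacement, let t ∈ ℕ, and let S_s and S_g be vertex covers of G of size at
most t. There exists a TAR reconfiguration sequence of vertex covers of G with
upper threshold t from S_s to S_g if and only if there exists a TAR
reconfiguration sequence of feedback vertex sets of G' with upper threshold t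
from S_s to S_g.

The triangle replacement is built on the vertex type `V ⊕ {e // e ∈ G.edgeSet}`:
`Sum.inl u` is the original vertex `u` and `Sum.inr e` is the new vertex `x_e`
added for the edge `e`; the sets `S_s, S_g ⊆ V` are viewed in `G'` via
`Finset.image Sum.inl`.
-/

/-- `S` is a vertex cover of `G`. -/
def IsVC {V : Type} (G : SimpleGraph V) (S : Finset V) : Prop :=
  ∀ ⦃u v : V⦄, G.Adj u v → u ∈ S ∨ v ∈ S

/-- `S` is a feedback vertex set of `H`: it meets every cycle of `H`. -/
def IsFVS {W : Type} [DecidableEq W] (H : SimpleGraph W) (S : Finset W) : Prop :=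
  ∀ (v : W) (c : H.Walk v v), c.IsCycle → ∃ u ∈ c.support, u ∈ S

/-- One TAR step: `S'` is obtained from `S` by adding or removing exactly one
vertex. -/
def TarStep {V : Type} [DecidableEq V] (S S' : Finset V) : Prop :=
  ∃ x, (x ∉ S ∧ S' = insert x S) ∨ (x ∈ S ∧ S' = S.erase x)

/-- The triangle replacement `G'` of `G`: for every edge `e = {u,v}` of `G`, a
new vertex `x_e` adjacent to `u` and to `v` is added (keeping all edges of
`G`). -/
def TriRep {V : Type} (G : SimpleGraph V) :
    SimpleGraph (V ⊕ {e : Sym2 V // e ∈ G.edgeSet}) where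
  Adj a b :=
    match a, b with
    | .inl u, .inl v => G.Adj u v
    | .inl u, .inr e => u ∈ (e : Sym2 V)
    | .inr e, .inl u => u ∈ (e : Sym2 V)
    | .inr _, .inr _ => False
  symm := by
    constructor
    rintro (u | e) (v | f) h
    · exact G.adj_symm h
    · exact h
    · exact h
    · exact h.elim
  loopless := by
    constructor
    rintro (u | e) h
    · exact G.irrefl h
    · exact h

open SimpleGraph


lemma support_getElem {W : Type} {H : SimpleGraph W} {u v : W} (p : H.Walk u v) :
    ∀ (i : ℕ) (h : i < p.support.length), p.support[i] = p.getVert i := by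
  induction p with
  | nil => intro i h; simp [Walk.support_nil] at h; subst h; simp
  | cons h p ih =>
    intro i hi
    cases i with
    | zero => simp [Walk.support_cons]
    | succ n =>
      simp only [Walk.support_cons, List.getElem_cons_succ, Walk.getVert_cons_succ]
      exact ih n (by simpa [Walk.support_cons] using hi)

lemma getVert_mem_support {W : Type} {H : SimpleGraph W} {u v : W} (p : H.Walk u v) (i : ℕ) :
    p.getVert i ∈ p.support := by
  rw [Walk.mem_support_iff_exists_getVert]
  by_cases h : i ≤ p.length
  · exact ⟨i, rfl, h⟩
  · exact ⟨p.length, by rw [Walk.getVert_length, Walk.getVert_of_length_le _ (by omega)], le_rfl⟩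

variable {V : Type} [DecidableEq V] {G : SimpleGraph V}

lemma cycle_gedge_inr (e : {e : Sym2 V // e ∈ G.edgeSet})
    (c : (TriRep G).Walk (Sum.inr e) (Sum.inr e)) (hc : c.IsCycle) :
    ∃ u w, G.Adj u w ∧ Sum.inl u ∈ c.support ∧ Sum.inl w ∈ c.support := by
  have hn : 3 ≤ c.length := hc.three_le_length
  have h1 : (TriRep G).Adj (Sum.inr e) (c.getVert 1) := by
    have := c.adj_getVert_succ (i := 0) (by omega)
    simpa [c.getVert_zero] using this
  have h2 : (TriRep G).Adj (c.getVert (c.length - 1)) (Sum.inr e) := by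
    have := c.adj_getVert_succ (i := c.length - 1) (by omega)
    rw [show c.length - 1 + 1 = c.length by omega] at this
    simpa [c.getVert_length] using this
  obtain ⟨u, hu⟩ : ∃ u, c.getVert 1 = Sum.inl u := by
    rcases hgv : c.getVert 1 with u | f
    · exact ⟨u, rfl⟩
    · rw [hgv] at h1; exact absurd h1 (by simp [TriRep])
  obtain ⟨w, hw⟩ : ∃ w, c.getVert (c.length - 1) = Sum.inl w := by
    rcases hgv : c.getVert (c.length - 1) with u | f
    · exact ⟨u, rfl⟩
    · rw [hgv] at h2; exact absurd h2 (by simp [TriRep])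
  have hue : u ∈ (e : Sym2 V) := by rw [hu] at h1; exact h1
  have hwe : w ∈ (e : Sym2 V) := by rw [hw] at h2; exact h2
  have hlen : c.support.length = c.length + 1 := Walk.length_support c
  have hne : u ≠ w := by
    rintro rfl
    have hnd := hc.support_nodup
    have htl : c.support.tail.length = c.length := by
      rw [List.length_tail, hlen]; omega
    have e1 : c.support.tail[0]'(by omega) = Sum.inl u := by
      rw [List.getElem_tail, support_getElem c 1 (by omega), hu]
    have e2 : c.support.tail[c.length - 2]'(by omega) = Sum.inl u := by
      rw [List.getElem_tail]
      simp only [show c.length - 2 + 1 = c.length - 1 from by omega]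
      rw [support_getElem c (c.length - 1) (by omega), hw]
    have := (hnd.getElem_inj_iff (hi := by omega) (hj := by omega)).mp (e1.trans e2.symm)
    omega
  have hee : (e : Sym2 V) = s(u, w) := (Sym2.mem_and_mem_iff hne).mp ⟨hue, hwe⟩
  have hadj : G.Adj u w := by
    have := e.2
    rw [hee, SimpleGraph.mem_edgeSet] at this
    exact this
  exact ⟨u, w, hadj, hu ▸ getVert_mem_support c 1, hw ▸ getVert_mem_support c (c.length - 1)⟩

lemma cycle_gedge {v} (c : (TriRep G).Walk v v) (hc : c.IsCycle) :
    ∃ u w, G.Adj u w ∧ Sum.inl u ∈ c.support ∧ Sum.inl w ∈ c.support := by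
  rcases Classical.em (∃ e, Sum.inr e ∈ c.support) with hinr | hinr
  · obtain ⟨e, he⟩ := hinr
    obtain ⟨u, w, hadj, hu, hw⟩ := cycle_gedge_inr e (c.rotate _ he) (hc.rotate he)
    have hsub : ∀ x, x ∈ (c.rotate _ he).support → x ∈ c.support := by
      intro x hx
      rw [(c.rotate _ he).support_eq_cons] at hx
      rcases List.mem_cons.mp hx with rfl | hx
      · exact he
      · exact List.mem_of_mem_tail (((Walk.support_rotate c _ he).mem_iff).mp hx)
    exact ⟨u, w, hadj, hsub _ hu, hsub _ hw⟩
  · push_neg at hinr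
    obtain ⟨u, rfl⟩ : ∃ u, v = Sum.inl u := by
      rcases v with u | e
      · exact ⟨u, rfl⟩
      · exact absurd (c.start_mem_support) (by simpa using hinr e)
    have hlt : 0 < c.length := by have := hc.three_le_length; omega
    have h1 : (TriRep G).Adj (Sum.inl u) (c.getVert 1) := by
      have := c.adj_getVert_succ (i := 0) hlt
      simpa [c.getVert_zero] using this
    have hmem := getVert_mem_support c 1
    obtain ⟨w, hw⟩ : ∃ w, c.getVert 1 = Sum.inl w := by
      rcases hgv : c.getVert 1 with w | f
      · exact ⟨w, rfl⟩
      · rw [hgv] at hmem; exact absurd hmem (hinr f)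
    rw [hw] at h1 hmem
    exact ⟨u, w, h1, c.start_mem_support, hmem⟩

lemma isFVS_image {S : Finset V} (hS : IsVC G S) :
    IsFVS (TriRep G) (S.image Sum.inl) := by
  intro v c hc
  obtain ⟨u, w, hadj, hu, hw⟩ := cycle_gedge c hc
  rcases hS hadj with h | h
  · exact ⟨Sum.inl u, hu, Finset.mem_image_of_mem _ h⟩
  · exact ⟨Sum.inl w, hw, Finset.mem_image_of_mem _ h⟩

noncomputable def pick (G : SimpleGraph V) : (V ⊕ {e : Sym2 V // e ∈ G.edgeSet}) → V
  | Sum.inl u => u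
  | Sum.inr e => (e : Sym2 V).out.1

lemma isVC_image {B : Finset (V ⊕ {e : Sym2 V // e ∈ G.edgeSet})}
    (hB : IsFVS (TriRep G) B) : IsVC G (B.image (pick G)) := by
  intro u w huw
  have he : s(u, w) ∈ G.edgeSet := huw
  have h1 : (TriRep G).Adj (Sum.inl u) (Sum.inr ⟨s(u,w), he⟩) := by
    show u ∈ s(u, w); simp
  have h2 : (TriRep G).Adj (Sum.inr ⟨s(u,w), he⟩) (Sum.inl w) := by
    show w ∈ s(u, w); simp
  have h3 : (TriRep G).Adj (Sum.inl w) (Sum.inl u) := huw.symm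
  have hc : (Walk.cons h1 (Walk.cons h2 (Walk.cons h3 Walk.nil))).IsCycle := by
    rw [Walk.isCycle_def]
    refine ⟨?_, by simp, ?_⟩
    · rw [Walk.isTrail_def]
      simp [Walk.edges_cons, huw.ne, Sym2.eq_iff]
    · simp [huw.ne, huw.ne.symm]
  obtain ⟨x, hxs, hxB⟩ := hB _ _ hc
  simp only [Walk.support_cons, Walk.support_nil, List.mem_cons, List.mem_singleton] at hxs
  rcases hxs with rfl | rfl | rfl | rfl | h
  · exact Or.inl (Finset.mem_image_of_mem _ hxB)
  · have hmem : pick G (Sum.inr ⟨s(u,w), he⟩) ∈ s(u, w) := Sym2.out_fst_mem _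
    rw [Sym2.mem_iff] at hmem
    rcases hmem with h | h
    · exact Or.inl (h ▸ Finset.mem_image_of_mem (pick G) hxB)
    · exact Or.inr (h ▸ Finset.mem_image_of_mem (pick G) hxB)
  · exact Or.inr (Finset.mem_image_of_mem _ hxB)
  · exact Or.inl (Finset.mem_image_of_mem _ hxB)
  · simp at h

lemma tarStep_image_inl {S S' : Finset V} (h : TarStep S S') :
    TarStep (S.image (Sum.inl : V → V ⊕ {e : Sym2 V // e ∈ G.edgeSet}))
      (S'.image Sum.inl) := by
  obtain ⟨x, hx⟩ := h
  refine ⟨Sum.inl x, ?_⟩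
  rcases hx with ⟨hx, rfl⟩ | ⟨hx, rfl⟩
  · exact Or.inl ⟨by simp [Finset.mem_image, hx], Finset.image_insert _ _ _⟩
  · exact Or.inr ⟨Finset.mem_image_of_mem _ hx, Finset.image_erase Sum.inl_injective _ _⟩

lemma tarStep_image_pick {B B' : Finset (V ⊕ {e : Sym2 V // e ∈ G.edgeSet})}
    (h : TarStep B B') :
    B.image (pick G) = B'.image (pick G) ∨
      TarStep (B.image (pick G)) (B'.image (pick G)) := by
  obtain ⟨x, hx⟩ := h
  rcases hx with ⟨hx, rfl⟩ | ⟨hx, rfl⟩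
  · rw [Finset.image_insert]
    by_cases hmem : pick G x ∈ B.image (pick G)
    · exact Or.inl (Finset.insert_eq_self.mpr hmem).symm
    · exact Or.inr ⟨pick G x, Or.inl ⟨hmem, rfl⟩⟩
  · by_cases hex : ∃ y ∈ B.erase x, pick G y = pick G x
    · left
      apply Finset.Subset.antisymm ?_ (Finset.image_subset_image (Finset.erase_subset _ _))
      intro z hz
      rw [Finset.mem_image] at hz ⊢
      obtain ⟨y, hy, rfl⟩ := hz
      by_cases hyx : y = x
      · subst hyx
        obtain ⟨y', hy', he'⟩ := hex
        exact ⟨y', hy', he'⟩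
      · exact ⟨y, Finset.mem_erase.mpr ⟨hyx, hy⟩, rfl⟩
    · right
      push_neg at hex
      refine ⟨pick G x, Or.inr ⟨Finset.mem_image_of_mem _ hx, ?_⟩⟩
      ext z
      simp only [Finset.mem_image, Finset.mem_erase]
      constructor
      · rintro ⟨y, ⟨hyx, hy⟩, rfl⟩
        exact ⟨hex y (Finset.mem_erase.mpr ⟨hyx, hy⟩), y, hy, rfl⟩
      · rintro ⟨hz, y, hy, rfl⟩
        exact ⟨y, ⟨fun h => hz (h ▸ rfl), hy⟩, rfl⟩

lemma compress {W : Type} [DecidableEq W] (P : Finset W → Prop) :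
    ∀ (m : ℕ) (C : Fin (m + 1) → Finset W), (∀ i, P (C i)) →
      (∀ i : Fin m, C i.castSucc = C i.succ ∨ TarStep (C i.castSucc) (C i.succ)) →
      ∃ (k : ℕ) (A : Fin (k + 1) → Finset W), A 0 = C 0 ∧ A (Fin.last k) = C (Fin.last m) ∧
        (∀ i, P (A i)) ∧ ∀ i : Fin k, TarStep (A i.castSucc) (A i.succ) := by
  intro m
  induction m with
  | zero => exact fun C hP _ => ⟨0, C, rfl, rfl, hP, fun i => i.elim0⟩
  | succ m ih =>
    intro C hP hstep
    obtain ⟨k, A, hA0, hAl, hAP, hAstep⟩ :=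
      ih (fun i => C i.castSucc) (fun i => hP _) (fun i => by
        have := hstep i.castSucc
        simpa only [Fin.succ_castSucc] using this)
    rcases hstep (Fin.last m) with heq | hT
    · refine ⟨k, A, by simpa using hA0, ?_, hAP, hAstep⟩
      rw [hAl]
      show C (Fin.last m).castSucc = _
      rw [heq, Fin.succ_last]
    · refine ⟨k + 1, Fin.snoc A (C (Fin.last (m + 1))), ?_, ?_, ?_, ?_⟩
      · rw [show (0 : Fin (k + 2)) = Fin.castSucc 0 from rfl, Fin.snoc_castSucc]
        simpa using hA0
      · simp [Fin.snoc_last]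
      · intro i
        refine Fin.lastCases ?_ (fun j => ?_) i
        · rw [Fin.snoc_last]; exact hP _
        · rw [Fin.snoc_castSucc]; exact hAP j
      · intro i
        refine Fin.lastCases ?_ (fun j => ?_) i
        · rw [show (Fin.last k).castSucc = Fin.castSucc (Fin.last k) from rfl,
            Fin.snoc_castSucc, Fin.succ_last, Fin.snoc_last, hAl]
          rw [Fin.succ_last] at hT
          exact hT
        · rw [Fin.succ_castSucc, Fin.snoc_castSucc, Fin.snoc_castSucc]
          exact hAstep j

theorem stmt15 {V : Type} [Fintype V] [DecidableEq V] (G : SimpleGraph V)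
    (t : ℕ) (Ss Sg : Finset V)
    (hs : IsVC G Ss ∧ Ss.card ≤ t) (hg : IsVC G Sg ∧ Sg.card ≤ t) :
    (∃ (m : ℕ) (A : Fin (m + 1) → Finset V),
        A 0 = Ss ∧ A (Fin.last m) = Sg ∧
        (∀ i, IsVC G (A i) ∧ (A i).card ≤ t) ∧
        ∀ i : Fin m, TarStep (A i.castSucc) (A i.succ)) ↔
    (∃ (m : ℕ) (B : Fin (m + 1) → Finset (V ⊕ {e : Sym2 V // e ∈ G.edgeSet})),
        B 0 = Ss.image Sum.inl ∧ B (Fin.last m) = Sg.image Sum.inl ∧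
        (∀ i, IsFVS (TriRep G) (B i) ∧ (B i).card ≤ t) ∧
        ∀ i : Fin m, TarStep (B i.castSucc) (B i.succ)) := by
  constructor
  · rintro ⟨m, A, h0, hl, hP, hstep⟩
    refine ⟨m, fun i => (A i).image Sum.inl, by simp only []; rw [h0], by simp only []; rw [hl], fun i => ?_, fun i => tarStep_image_inl (hstep i)⟩
    exact ⟨isFVS_image (hP i).1,
      by rw [Finset.card_image_of_injective _ Sum.inl_injective]; exact (hP i).2⟩
  · rintro ⟨m, B, h0, hl, hP, hstep⟩
    obtain ⟨k, A, hA0, hAl, hAP, hAstep⟩ :=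
      compress (fun S => IsVC G S ∧ S.card ≤ t) m (fun i => (B i).image (pick G))
        (fun i => ⟨isVC_image (hP i).1, le_trans (Finset.card_image_le) (hP i).2⟩)
        (fun i => tarStep_image_pick (hstep i))
    refine ⟨k, A, ?_, ?_, hAP, hAstep⟩
    · rw [hA0]
      show (B 0).image (pick G) = Ss
      rw [h0, Finset.image_image]
      have : pick G ∘ (Sum.inl : V → V ⊕ {e : Sym2 V // e ∈ G.edgeSet}) = id := rfl
      rw [this, Finset.image_id]
    · rw [hAl]
      show (B (Fin.last m)).image (pick G) = Sg
      rw [hl, Finset.image_image]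
      have : pick G ∘ (Sum.inl : V → V ⊕ {e : Sym2 V // e ∈ G.edgeSet}) = id := rfl
      rw [this, Finset.image_id]
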